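/- Let p ≥ 1 with conjugate exponent q (1/p + 1/q = 1, with 1/q = 0 when p = 1), and let b > 0. Then there exists ε₀ > 0 such that for all 0 < ε < ε₀ the series ∑_{m=0}^∞ (2εb)^m · m! / (Γ(m/p + 1/2) · Γ(m/q + 1)) converges. -/

import Mathlib

open MeasureTheory Set in
private lemma gamma_lb {x : ℝ} (hx : 1 ≤ x) :
    (x - 1) ^ (x - 1) * Real.exp (-x) ≤ Real.Gamma x := by
  have hx0 : (0:ℝ) < x := by linarith
  have h1 : (0:ℝ) ≤ x - 1 := by linarith
  rw [Real.Gamma_eq_integral hx0]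
  have hInt : IntegrableOn (fun t : ℝ => Real.exp (-t) * t ^ (x - 1)) (Ioi 0) :=
    Real.GammaIntegral_convergent hx0
  have hsub : Ioc (x - 1) x ⊆ Ioi (0:ℝ) := fun t ht => h1.trans_lt ht.1
  have step1 : ∫ t in Ioc (x-1) x, Real.exp (-t) * t ^ (x-1) ≤
      ∫ t in Ioi (0:ℝ), Real.exp (-t) * t ^ (x-1) := by
    refine setIntegral_mono_set hInt ?_ hsub.eventuallyLE
    filter_upwards [ae_restrict_mem measurableSet_Ioi] with t ht
    have : (0:ℝ) < t := ht
    positivity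
  refine le_trans ?_ step1
  have hconst : ∫ _ in Ioc (x-1) x, ((x-1) ^ (x-1) * Real.exp (-x)) =
      (x - 1) ^ (x - 1) * Real.exp (-x) := by
    rw [setIntegral_const, Real.volume_real_Ioc]
    simp
  rw [← hconst]
  refine setIntegral_mono_on (integrableOn_const measure_Ioc_lt_top.ne)
    (hInt.mono_set hsub) measurableSet_Ioc ?_
  intro t ht
  rw [mul_comm]
  gcongr <;> first
    | exact ht.2
    | exact ht.1.le
    | exact Real.rpow_le_rpow h1 ht.1.le h1
    | exact Real.exp_le_exp.2 (neg_le_neg ht.2)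
    | positivity

private lemma key_bound (s t : ℝ) (hs0 : 0 < s) (hs1 : s ≤ 1) (ht0 : 0 ≤ t) (hst : s + t = 1)
    (m : ℕ) (hm1 : 1 ≤ m) (hm2 : 2 ≤ (m : ℝ) * s) :
    (Nat.factorial m : ℝ) ≤
      (Real.exp (4 - (s * Real.log (s / 2) + t * Real.log t))) ^ m *
        (Real.Gamma ((m : ℝ) * s + 1 / 2) * Real.Gamma ((m : ℝ) * t + 1)) := by
  set M : ℝ := (m : ℝ) with hM
  have hM1 : (1:ℝ) ≤ M := by rw [hM]; exact_mod_cast hm1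
  set a : ℝ := M * s with ha
  set c : ℝ := M * t with hc
  have hac : a + c = M := by rw [ha, hc, ← mul_add, hst, mul_one]
  have ha2 : 2 ≤ a := hm2
  have hc0 : 0 ≤ c := mul_nonneg (by linarith) ht0
  have hΓ1 : 0 < Real.Gamma (a + 1/2) := Real.Gamma_pos_of_pos (by linarith)
  have hΓ2 : 0 < Real.Gamma (c + 1) := Real.Gamma_pos_of_pos (by linarith)
  set C : ℝ := s * Real.log (s / 2) + t * Real.log t with hC
  have hfact : (0:ℝ) < (Nat.factorial m : ℝ) := by exact_mod_cast m.factorial_pos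
  rw [← Real.log_le_log_iff hfact (by positivity)]
  -- expand RHS log
  rw [Real.log_mul (by positivity) (by positivity), Real.log_mul hΓ1.ne' hΓ2.ne',
    Real.log_pow, Real.log_exp]
  -- bound log of factorial
  have hlf : Real.log (Nat.factorial m : ℝ) ≤ M * Real.log M := by
    have h1 : (Nat.factorial m : ℝ) ≤ (m:ℝ) ^ m := by
      exact_mod_cast Nat.factorial_le_pow m
    calc Real.log (Nat.factorial m : ℝ) ≤ Real.log ((m:ℝ) ^ m) :=
          Real.log_le_log hfact h1
      _ = M * Real.log M := by rw [Real.log_pow, hM]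
  -- lower bound for log Γ(a+1/2)
  have hG1 : a * Real.log M + a * Real.log (s/2) - (1/2) * Real.log M - a - 1/2
      ≤ Real.log (Real.Gamma (a + 1/2)) := by
    have hx : (1:ℝ) ≤ a + 1/2 := by linarith
    have hlb := gamma_lb hx
    have hpos : (0:ℝ) < a + 1/2 - 1 := by linarith
    have hlog : Real.log ((a + 1/2 - 1) ^ (a + 1/2 - 1) * Real.exp (-(a + 1/2)))
        = (a - 1/2) * Real.log (a - 1/2) - (a + 1/2) := by
      rw [Real.log_mul (by positivity) (by positivity), Real.log_rpow hpos, Real.log_exp]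
      ring_nf
    have h2 : (a - 1/2) * Real.log (a - 1/2) - (a + 1/2)
        ≤ Real.log (Real.Gamma (a + 1/2)) := by
      rw [← hlog]; exact Real.log_le_log (by positivity) hlb
    refine le_trans ?_ h2
    -- now pure inequality manipulation
    have hL2pos : (0:ℝ) < a / 2 := by linarith
    have hL1 : Real.log (a/2) ≤ Real.log (a - 1/2) :=
      Real.log_le_log hL2pos (by linarith)
    have hmul1 : (a - 1/2) * Real.log (a/2) ≤ (a - 1/2) * Real.log (a - 1/2) :=
      mul_le_mul_of_nonneg_left hL1 (by linarith)
    have heq : Real.log (a/2) = Real.log M + Real.log (s/2) := by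
      have : a / 2 = M * (s/2) := by rw [ha]; ring
      rw [this, Real.log_mul (by linarith) (by positivity)]
    have hL3 : Real.log (a/2) ≤ Real.log M := Real.log_le_log hL2pos
      (by nlinarith [mul_le_mul_of_nonneg_left hs1 (by linarith : (0:ℝ) ≤ M)])
    have hexp : (a - 1/2) * Real.log (a/2)
        = a * Real.log M + a * Real.log (s/2) - (1/2) * Real.log (a/2) := by
      rw [heq]; ring
    linarith [hmul1, hexp, hL3]
  -- lower bound for log Γ(c+1)
  have hG2 : c * Real.log M + c * Real.log t - c - 1
      ≤ Real.log (Real.Gamma (c + 1)) := by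
    have hx : (1:ℝ) ≤ c + 1 := by linarith
    have hlb := gamma_lb hx
    rw [show c + 1 - 1 = c by ring] at hlb
    rcases eq_or_lt_of_le hc0 with h | h
    · rw [← h] at hlb ⊢
      simp only [Real.rpow_zero, one_mul] at hlb
      have : Real.exp (-(0+1)) ≤ Real.Gamma ((0:ℝ) + 1) := hlb
      have h0 : (0:ℝ) * Real.log M + 0 * Real.log t - 0 - 1 = -1 := by ring
      rw [h0]
      calc (-1:ℝ) = Real.log (Real.exp (-(0+1))) := by rw [Real.log_exp]; ring
        _ ≤ Real.log (Real.Gamma ((0:ℝ) + 1)) :=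
            Real.log_le_log (Real.exp_pos _) hlb
    · have hlog : Real.log (c ^ c * Real.exp (-(c + 1)))
          = c * Real.log c - (c + 1) := by
        rw [Real.log_mul (by positivity) (by positivity), Real.log_rpow h,
          Real.log_exp]; ring
      have h2 : c * Real.log c - (c + 1) ≤ Real.log (Real.Gamma (c + 1)) := by
        rw [← hlog]; exact Real.log_le_log (by positivity) hlb
      refine le_trans ?_ h2
      have hMt : 0 < t := by
        rcases lt_or_ge 0 t with h' | h'
        · exact h'
        · exfalso; rw [hc] at h; nlinarith
      have heq : c * Real.log c = c * Real.log M + c * Real.log t := by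
        rw [hc, Real.log_mul (by linarith) hMt.ne']; ring
      linarith [heq.ge]
  -- final arithmetic
  have hMC : M * (4 - C) = 4 * M - (a * Real.log (s/2) + c * Real.log t) := by
    rw [hC, ha, hc]; ring
  have hsum : a * Real.log M + c * Real.log M = M * Real.log M := by
    rw [← add_mul, hac]
  have hlogM : Real.log M ≤ M - 1 := Real.log_le_sub_one_of_pos (by linarith)
  have hgoal : M * Real.log M ≤ M * (4 - C)
      + (a * Real.log M + a * Real.log (s/2) - (1/2) * Real.log M - a - 1/2)
      + (c * Real.log M + c * Real.log t - c - 1) := by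
    rw [hMC]
    linarith [hsum, hlogM, hac, hM1]
  rw [← hM]
  calc Real.log (Nat.factorial m : ℝ) ≤ M * Real.log M := hlf
    _ ≤ _ := by linarith [hG1, hG2, hgoal]

/-- Convergence of the auxiliary series `β(p,q,b,ε)` for `ε` small enough. -/
theorem beta_series_summable (p q b : ℝ) (hp : 1 ≤ p) (hpq : 1 / p + 1 / q = 1)
    (hb : 0 < b) :
    ∃ ε₀ > 0, ∀ ε : ℝ, 0 < ε → ε < ε₀ →
      Summable (fun m : ℕ =>
        (2 * ε * b) ^ m * (Nat.factorial m : ℝ) /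
          (Real.Gamma ((m : ℝ) / p + 1 / 2) * Real.Gamma ((m : ℝ) / q + 1))) := by
  have hp0 : 0 < p := lt_of_lt_of_le one_pos hp
  set s : ℝ := 1 / p with hs
  set t : ℝ := 1 / q with ht
  have hs0 : 0 < s := by positivity
  have hs1 : s ≤ 1 := by rw [hs]; rw [div_le_one hp0]; exact hp
  have hst : s + t = 1 := hpq
  have ht0 : 0 ≤ t := by linarith
  set K : ℝ := Real.exp (4 - (s * Real.log (s / 2) + t * Real.log t)) with hK
  have hK0 : 0 < K := Real.exp_pos _
  refine ⟨1 / (2 * b * K), by positivity, fun ε hε hεlt => ?_⟩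
  have hr1 : 2 * ε * b * K < 1 := by
    rw [lt_div_iff₀ (by positivity)] at hεlt
    nlinarith
  set r : ℝ := 2 * ε * b * K with hr
  have hr0 : 0 ≤ r := by positivity
  -- rewrite divisions as multiplications
  have hrw1 : ∀ m : ℕ, (m : ℝ) / p = (m : ℝ) * s := fun m => by
    rw [hs, mul_one_div]
  have hrw2 : ∀ m : ℕ, (m : ℝ) / q = (m : ℝ) * t := fun m => by
    rw [ht, mul_one_div]
  -- positivity of Gamma factors
  have hΓ : ∀ m : ℕ, 0 < Real.Gamma ((m : ℝ) * s + 1 / 2) * Real.Gamma ((m : ℝ) * t + 1) :=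
    fun m => mul_pos
      (Real.Gamma_pos_of_pos (by positivity))
      (Real.Gamma_pos_of_pos (by positivity))
  simp only [hrw1, hrw2]
  set N : ℕ := max 1 ⌈2 / s⌉₊ with hN
  rw [← summable_nat_add_iff N]
  refine Summable.of_nonneg_of_le (f := fun m : ℕ => r ^ m) (fun m => ?_) (fun m => ?_)
    (summable_geometric_of_lt_one hr0 hr1)
  · exact div_nonneg (by positivity) (hΓ _).le
  · set m' : ℕ := m + N with hm'
    have hm1 : 1 ≤ m' := le_trans (le_max_left _ _) (Nat.le_add_left _ _)
    have hm2 : 2 ≤ (m' : ℝ) * s := by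
      have h1 : (⌈2 / s⌉₊ : ℝ) ≤ (m' : ℝ) := by
        exact_mod_cast le_trans (le_max_right 1 _) (Nat.le_add_left _ _)
      have h2 : 2 / s ≤ (m' : ℝ) := le_trans (Nat.le_ceil _) h1
      rw [div_le_iff₀ hs0] at h2
      linarith
    have hkey := key_bound s t hs0 hs1 ht0 hst m' hm1 hm2
    have hdiv : (Nat.factorial m' : ℝ) /
        (Real.Gamma ((m' : ℝ) * s + 1 / 2) * Real.Gamma ((m' : ℝ) * t + 1)) ≤ K ^ m' := by
      rw [div_le_iff₀ (hΓ m')]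
      exact hkey
    calc (2 * ε * b) ^ m' * (Nat.factorial m' : ℝ) /
          (Real.Gamma ((m' : ℝ) * s + 1 / 2) * Real.Gamma ((m' : ℝ) * t + 1))
        = (2 * ε * b) ^ m' * ((Nat.factorial m' : ℝ) /
          (Real.Gamma ((m' : ℝ) * s + 1 / 2) * Real.Gamma ((m' : ℝ) * t + 1))) := by
          rw [mul_div_assoc]
      _ ≤ (2 * ε * b) ^ m' * K ^ m' :=
          mul_le_mul_of_nonneg_left hdiv (by positivity)
      _ = r ^ m' := by rw [hr, ← mul_pow]
      _ ≤ r ^ m := pow_le_pow_of_le_one hr0 hr1.le (Nat.le_add_right _ _)
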